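/- Fix integers k ≥ 2 and d ≥ 3 and set L := (k−1)(d−1). There exist constants C > 0 and θ₀ ∈ (0, 1 − 1/L), depending only on d and k, such that for every θ ∈ (0, θ₀] and every p ∈ [0, θ], one has W(p) − R(p) ≥ c·(θ−p)·(d−1)·(p^{(k−1)(d−2)} − C·p^L). -/

import Mathlib

lemma aux_R_le (L : ℕ) (hL2 : 2 ≤ L) (p r : ℝ) (hp0 : 0 ≤ p) (hp : p ≤ 1/8)
    (hr0 : 0 ≤ r) (hr1 : r < 1) (heq : r = p + (1-p)*r^L) : r ≤ 2*p := by
  by_contra hcon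
  push_neg at hcon
  rcases eq_or_lt_of_le hp0 with hp0' | hp0'
  · have hrpos : 0 < r := by linarith
    have h1 : r = r^L := by rw [← hp0'] at heq; simpa using heq
    have h2 : r^L ≤ r^2 := pow_le_pow_of_le_one hr0 hr1.le hL2
    nlinarith
  · set a : ℝ := 2*p with ha
    have h2p1 : a < 1 := lt_trans hcon hr1
    have hden : 0 < 1 - a := by linarith
    set lam : ℝ := (1-r)/(1-a) with hlam
    set mu : ℝ := (r-a)/(1-a) with hmu
    have hlam0 : 0 ≤ lam := div_nonneg (by linarith) hden.le
    have hmu0 : 0 ≤ mu := div_nonneg (by linarith) hden.le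
    have hsum : lam + mu = 1 := by
      rw [hlam, hmu, ← add_div]; field_simp; ring
    have hcx := (convexOn_pow L).2 (Set.mem_Ici.2 (by linarith : (0:ℝ) ≤ a))
      (Set.mem_Ici.2 zero_le_one) hlam0 hmu0 hsum
    simp only [smul_eq_mul, one_pow, mul_one] at hcx
    rw [show lam * a + mu = r by rw [hlam, hmu]; field_simp; ring] at hcx
    have haL : a^L ≤ p/2 := by
      have h1 : a^L ≤ a^2 := pow_le_pow_of_le_one (by linarith) h2p1.le hL2
      nlinarith
    have hlam' : lam * (1-a) = 1 - r := div_mul_cancel₀ _ hden.ne'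
    have hmu' : mu * (1-a) = r - a := div_mul_cancel₀ _ hden.ne'
    have haL0 : 0 ≤ a^L := pow_nonneg (by linarith) L
    have h2 : (1-p)*r^L ≤ (1-p)*(lam*a^L + mu) :=
      mul_le_mul_of_nonneg_left hcx (by linarith)
    nlinarith [mul_le_mul_of_nonneg_left haL hlam0,
      mul_nonneg (mul_nonneg hp0'.le hlam0) haL0,
      mul_nonneg hp0'.le (by linarith : 0 ≤ 1 - r)]

theorem stmt_9 (k d : ℕ) (hk : 2 ≤ k) (hd : 3 ≤ d) (L : ℕ) (hL : L = (k-1)*(d-1))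
    (R : ℝ → ℝ)
    (hR : ∀ p : ℝ, 0 ≤ p → p < 1 - 1/(L:ℝ) →
      R p ∈ Set.Ico (0:ℝ) 1 ∧ R p = p + (1-p) * (R p)^L)
    (hR1 : ∀ p : ℝ, 1 - 1/(L:ℝ) ≤ p → p ≤ 1 → R p = 1)
    (W : ℝ → ℝ → ℝ)
    (hW : ∀ θ p : ℝ,
      (0 ≤ p → p < θ →
        W θ p = p
          + (2 - Real.logb 2 3) * (θ - p) *
              ((p^(k-1))^(d-1) + ((d:ℝ)-1) * (1 - p^(k-1)) * (p^(k-1))^(d-2))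
          + (1 - p - (2 - Real.logb 2 3) * (θ - p)) * ((R p)^(k-1))^(d-1)) ∧
      (θ ≤ p → p ≤ 1 → W θ p = R p)) :
    ∃ C θ₀ : ℝ, 0 < C ∧ 0 < θ₀ ∧ θ₀ < 1 - 1/(L:ℝ) ∧
      ∀ θ : ℝ, 0 < θ → θ ≤ θ₀ → ∀ p : ℝ, 0 ≤ p → p ≤ θ →
        W θ p - R p ≥
          (2 - Real.logb 2 3) * (θ - p) * ((d:ℝ)-1) * (p^((k-1)*(d-2)) - C * p^L) := by
  have hL2 : 2 ≤ L := by
    subst hL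
    calc 2 = 1 * 2 := by norm_num
    _ ≤ (k-1)*(d-1) := Nat.mul_le_mul (by omega) (by omega)
  have hL2' : (2:ℝ) ≤ (L:ℝ) := by exact_mod_cast hL2
  have hLhalf : 1/(L:ℝ) ≤ 1/2 := by
    apply one_div_le_one_div_of_le <;> linarith
  have hc : 0 < 2 - Real.logb 2 3 := by
    have h3 : (3:ℝ) < (2:ℝ)^(2:ℝ) := by
      rw [show (2:ℝ) = ((2:ℕ):ℝ) from by norm_num, Real.rpow_natCast]; norm_num
    have : Real.logb 2 3 < 2 := by
      calc Real.logb 2 3 < Real.logb 2 ((2:ℝ)^(2:ℝ)) :=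
            Real.logb_lt_logb (by norm_num) (by norm_num) h3
        _ = 2 := by rw [Real.logb_rpow (by norm_num) (by norm_num)]
    linarith
  set c : ℝ := 2 - Real.logb 2 3 with hcdef
  set D : ℝ := (d:ℝ) with hD
  have hD3 : (3:ℝ) ≤ D := by rw [hD]; exact_mod_cast hd
  refine ⟨(2:ℝ)^L + D, 1/8, by positivity, by norm_num, by linarith, ?_⟩
  set C : ℝ := (2:ℝ)^L + D with hC
  intro θ hθ hθ8 p hp0 hpθ
  rcases lt_or_eq_of_le hpθ with hlt | hEq
  · -- p < θ
    have hp8 : p ≤ 1/8 := by linarith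
    obtain ⟨⟨hr0, hr1⟩, heq⟩ := hR p hp0 (by linarith : p < 1 - 1/(L:ℝ))
    have h2p : R p ≤ 2*p := aux_R_le L hL2 p (R p) hp0 hp8 hr0 hr1 heq
    have hrl : (R p)^L ≤ 2^L * p^L := by
      calc (R p)^L ≤ (2*p)^L := pow_le_pow_left₀ hr0 h2p L
        _ = 2^L * p^L := mul_pow 2 p L
    rw [(hW θ p).1 hp0 hlt]
    have hRL : ((R p)^(k-1))^(d-1) = (R p)^L := by rw [← pow_mul, ← hL]
    have hpm : p^((k-1)*(d-2)) = (p^(k-1))^(d-2) := pow_mul p _ _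
    rw [hRL, hpm]
    set q2 : ℝ := (p^(k-1))^(d-2) with hq2
    set s : ℝ := p^L with hs
    set rl : ℝ := (R p)^L with hrldef
    have hq : (p^(k-1))^(d-1) = q2 * p^(k-1) := by
      rw [hq2, show d-1 = (d-2)+1 from by omega, pow_succ]
    have hqs : q2 * p^(k-1) = s := by
      rw [hq2, ← pow_succ, show (d-2)+1 = d-1 from by omega, ← pow_mul, ← hL, hs]
    have hs0 : 0 ≤ s := pow_nonneg hp0 L
    have h2L1 : (1:ℝ) ≤ 2^L := by simpa using pow_le_pow_left₀ (by norm_num : (0:ℝ) ≤ 1) (by norm_num : (1:ℝ) ≤ 2) L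
    -- main pointwise inequality
    have main : (D-1)*(q2 - C*s) ≤
        ((p^(k-1))^(d-1) + (D-1)*(1-p^(k-1))*q2) - rl := by
      have hA : (p^(k-1))^(d-1) + (D-1)*(1-p^(k-1))*q2 = (D-1)*q2 - (D-2)*s := by
        rw [hq]; linear_combination ((2:ℝ) - D) * hqs
      rw [hA, hC]
      nlinarith [mul_nonneg (mul_nonneg (by linarith : (0:ℝ) ≤ D-2) (by linarith : (0:ℝ) ≤ 2^L)) hs0,
        mul_nonneg (mul_nonneg (by linarith : (0:ℝ) ≤ D-1) (by linarith : (0:ℝ) ≤ D-2)) hs0]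
    have hfac : 0 ≤ c * (θ - p) := mul_nonneg hc.le (by linarith)
    have expand : p + c*(θ-p)*((p^(k-1))^(d-1) + (D-1)*(1-p^(k-1))*q2)
        + (1 - p - c*(θ-p))*rl - R p
        = c*(θ-p)*(((p^(k-1))^(d-1) + (D-1)*(1-p^(k-1))*q2) - rl) := by
      rw [hrldef]; linear_combination (-1 : ℝ) * heq
    rw [ge_iff_le, expand,
      show c*(θ-p)*(D-1)*(q2 - C*s) = c*(θ-p)*((D-1)*(q2 - C*s)) from by ring]
    exact mul_le_mul_of_nonneg_left main hfac
  · -- p = θ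
    rw [(hW θ p).2 (le_of_eq hEq.symm) (by linarith : p ≤ 1), sub_self,
      show θ - p = 0 from by linarith]
    simp
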